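/- The self-similarity relation implies that the gap halves under doubling: (1/2)[T_\alpha(2p) - f(2p) H(\alpha)] = T_\alpha(p) - f(p) H(\alpha) for all p \in [0,1/2]. Consequently, to prove T_\alpha(p) \ge f(p) H(\alpha) for all p \in [0,1], it suffices to prove it for p \in [1/2, 1]. -/

import Mathlib

open Finset

/-- `f2 x = -x log₂ x`, the summand of base-2 Shannon entropy. -/
noncomputable def f2 (x : ℝ) : ℝ := -x * Real.logb 2 x

/-- Binary entropy function `H(α)` (base 2). -/
noncomputable def binEnt (α : ℝ) : ℝ := f2 α + f2 (1 - α)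

/-- Joint pmf of `(Xⁿ, Yⁿ)` where `Xⁿ` is i.i.d. Bernoulli(1/2) and
`Yⁿ = Xⁿ ⊕ Zⁿ` with `Zⁿ` i.i.d. Bernoulli(α) (a memoryless BSC(α)). -/
noncomputable def jointP (n : ℕ) (α : ℝ) (x y : Fin n → Bool) : ℝ :=
  (1/2)^n * ∏ i, (if x i = y i then 1 - α else α)

/-- `Pr{b(Xⁿ) = u, Yⁿ = y}`. -/
noncomputable def pBY (n : ℕ) (α : ℝ) (b : (Fin n → Bool) → Bool) (u : Bool)
    (y : Fin n → Bool) : ℝ :=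
  ∑ x : Fin n → Bool, if b x = u then jointP n α x y else 0

/-- `Pr{b(Xⁿ) = u}` for `Xⁿ` uniform on `{0,1}ⁿ`. -/
noncomputable def pB (n : ℕ) (b : (Fin n → Bool) → Bool) (u : Bool) : ℝ :=
  ∑ x : Fin n → Bool, if b x = u then (1/2)^n else 0

/-- `H(b(Xⁿ))`, the entropy of the Boolean function's output. -/
noncomputable def HB (n : ℕ) (b : (Fin n → Bool) → Bool) : ℝ :=
  ∑ u : Bool, f2 (pB n b u)

/-- `Pr{b(Xⁿ) = 0 ∣ Yⁿ = y}` (note `Pr{Yⁿ = y} = 2⁻ⁿ` since `Yⁿ` is uniform;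
`0` is encoded as `false`). -/
noncomputable def condP (n : ℕ) (α : ℝ) (b : (Fin n → Bool) → Bool)
    (y : Fin n → Bool) : ℝ :=
  (2:ℝ)^n * pBY n α b false y

/-- The conditional entropy `H(b(Xⁿ) ∣ Yⁿ)`. -/
noncomputable def condHB (n : ℕ) (α : ℝ) (b : (Fin n → Bool) → Bool) : ℝ :=
  ∑ y : Fin n → Bool, (1/2)^n * ∑ u : Bool, f2 ((2:ℝ)^n * pBY n α b u y)

/-- The mutual information `I(b(Xⁿ); Yⁿ) = H(b(Xⁿ)) - H(b(Xⁿ) ∣ Yⁿ)`. -/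
noncomputable def MI (n : ℕ) (α : ℝ) (b : (Fin n → Bool) → Bool) : ℝ :=
  HB n b - condHB n α b

/-- The numeric value of `x ∈ {0,1}ⁿ` with the first coordinate most significant;
`x ≺_L x'` in the lexicographic order iff `vecVal x < vecVal x'`. -/
def vecVal {n : ℕ} (x : Fin n → Bool) : ℕ :=
  ∑ i : Fin n, if x i then 2 ^ (n - 1 - i.val) else 0

/-- The unique lex Boolean function on `n` inputs whose preimage of `0` (= `false`)
is the initial segment of size `k` of the lexicographic order on `{0,1}ⁿ`. -/
def lexFun (n k : ℕ) : (Fin n → Bool) → Bool := fun x => decide (k ≤ vecVal x)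

/-- `T_α` at the dyadic rational `k/2ⁿ`:
`T_α(k/2ⁿ) = E_{Yⁿ} f(Pr{b(Xⁿ)=0 ∣ Yⁿ})` where `b` is the lex function on `n`
inputs with `Pr{b(Xⁿ)=0} = k/2ⁿ`. -/
noncomputable def Tdy (α : ℝ) (n k : ℕ) : ℝ :=
  ∑ y : Fin n → Bool, (1/2)^n * f2 (condP n α (lexFun n k) y)

lemma f2_zero : f2 0 = 0 := by simp [f2]

lemma f2_mul (a b : ℝ) : f2 (a*b) = a * f2 b + b * f2 a := by
  rcases eq_or_ne a 0 with rfl | ha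
  · simp [f2]
  rcases eq_or_ne b 0 with rfl | hb
  · simp [f2]
  simp only [f2, Real.logb, Real.log_mul ha hb]
  ring

lemma sum_pi_succ {n : ℕ} (g : (Fin (n+1) → Bool) → ℝ) :
    ∑ z : Fin (n+1) → Bool, g z = ∑ b : Bool, ∑ x : Fin n → Bool, g (Fin.cons b x) := by
  have h := Fintype.sum_equiv (Fin.consEquiv (fun _ : Fin (n+1) => Bool))
    (fun p : Bool × (Fin n → Bool) => g (Fin.cons p.1 p.2)) g (fun p => rfl)
  rw [← h, Fintype.sum_prod_type]

lemma vecVal_cons {n : ℕ} (b : Bool) (x : Fin n → Bool) :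
    vecVal (Fin.cons b x) = (if b then 2^n else 0) + vecVal x := by
  simp only [vecVal, Fin.sum_univ_succ, Fin.cons_zero, Fin.cons_succ, Fin.val_succ,
    Fin.val_zero]
  have h1 : n + 1 - 1 - 0 = n := by omega
  rw [h1]
  congr 1
  apply Finset.sum_congr rfl
  intro i _
  have h2 : n + 1 - 1 - (i.val + 1) = n - 1 - i.val := by omega
  rw [h2]

lemma vecVal_lt {n : ℕ} (x : Fin n → Bool) : vecVal x < 2^n := by
  induction n with
  | zero => simp [vecVal]
  | succ n ih =>
      rw [← Fin.cons_self_tail x, vecVal_cons]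
      have := ih (Fin.tail x)
      cases x 0 <;> simp <;> omega

lemma count_lt : ∀ (n k : ℕ), k ≤ 2^n →
    ∑ x : Fin n → Bool, (if vecVal x < k then (1:ℝ) else 0) = k := by
  intro n
  induction n with
  | zero =>
      intro k hk
      interval_cases k <;> simp [vecVal]
  | succ n ih =>
      intro k hk
      rw [sum_pi_succ]
      simp only [Fintype.sum_bool, vecVal_cons, show (false = true) = False from by simp,
        show (true = true) = True from by simp, if_true, if_false, zero_add]
      rcases le_or_gt k (2^n) with h | h
      · have h1 : ∑ x : Fin n → Bool, (if 2^n + vecVal x < k then (1:ℝ) else 0) = 0 := by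
          apply Finset.sum_eq_zero; intro x _
          rw [if_neg]; omega
        have h2 : ∑ x : Fin n → Bool, (if vecVal x < k then (1:ℝ) else 0) = k := by
          exact ih k h
        rw [h1, h2, zero_add]
      · have h1 : ∑ x : Fin n → Bool, (if 2^n + vecVal x < k then (1:ℝ) else 0)
            = ((k - 2^n : ℕ) : ℝ) := by
          rw [← ih (k - 2^n) (by omega)]
          apply Finset.sum_congr rfl; intro x _
          congr 1
          simp only [eq_iff_iff]
          omega
        have h2 : ∑ x : Fin n → Bool, (if vecVal x < k then (1:ℝ) else 0)
            = ((2^n : ℕ) : ℝ) := by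
          rw [← ih (2^n) le_rfl]
          apply Finset.sum_congr rfl; intro x _
          have := vecVal_lt x
          congr 1
          simp only [eq_iff_iff]
          omega
        rw [h1, h2]
        have hle : (2:ℕ)^n ≤ k := le_of_lt h
        push_cast [hle]
        ring

lemma sum_channel (α : ℝ) : ∀ (n : ℕ) (x : Fin n → Bool),
    ∑ y : Fin n → Bool, ∏ i, (if x i = y i then 1-α else α) = 1 := by
  intro n
  induction n with
  | zero => intro x; simp
  | succ n ih =>
      intro x
      rw [sum_pi_succ]
      have key : ∀ b : Bool, ∀ y : Fin n → Bool,
          ∏ i, (if x i = (Fin.cons b y : Fin (n+1) → Bool) i then 1-α else α)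
          = (if x 0 = b then 1-α else α) * ∏ i, (if Fin.tail x i = y i then 1-α else α) := by
        intro b y
        rw [Fin.prod_univ_succ]
        simp [Fin.tail]
        rfl
      simp only [key]
      rw [Fintype.sum_bool, ← Finset.mul_sum, ← Finset.mul_sum, ih (Fin.tail x),
        mul_one, mul_one]
      cases x 0 <;> norm_num

lemma jointP_cons {n : ℕ} (α : ℝ) (a c : Bool) (x y : Fin n → Bool) :
    jointP (n+1) α (Fin.cons a x) (Fin.cons c y)
    = (1/2) * (if a = c then 1-α else α) * jointP n α x y := by
  unfold jointP
  rw [Fin.prod_univ_succ]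
  simp only [Fin.cons_zero, Fin.cons_succ, pow_succ]
  ring

lemma hlex_iff (n k : ℕ) (x : Fin n → Bool) :
    lexFun n k x = false ↔ vecVal x < k := by
  simp only [lexFun, decide_eq_false_iff_not, not_le]

lemma lexFun_cons_true {n k : ℕ} (hk : k ≤ 2^n) (x : Fin n → Bool) :
    lexFun (n+1) k (Fin.cons true x) = true := by
  simp only [lexFun, vecVal_cons, if_true, decide_eq_true_eq]
  omega

lemma lexFun_cons_false {n k : ℕ} (x : Fin n → Bool) :
    lexFun (n+1) k (Fin.cons false x) = lexFun n k x := by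
  simp only [lexFun, vecVal_cons]
  norm_num

lemma pBY_cons {n k : ℕ} (α : ℝ) (hk : k ≤ 2^n) (c : Bool) (y : Fin n → Bool) :
    pBY (n+1) α (lexFun (n+1) k) false (Fin.cons c y)
    = (1/2) * (if c then α else 1-α) * pBY n α (lexFun n k) false y := by
  unfold pBY
  rw [sum_pi_succ, Fintype.sum_bool]
  have h1 : ∑ x : Fin n → Bool,
      (if lexFun (n+1) k (Fin.cons true x) = false
        then jointP (n+1) α (Fin.cons true x) (Fin.cons c y) else 0) = 0 := by
    apply Finset.sum_eq_zero; intro x _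
    rw [lexFun_cons_true hk]
    simp
  rw [h1, zero_add, Finset.mul_sum]
  apply Finset.sum_congr rfl
  intro x _
  rw [lexFun_cons_false]
  by_cases h : lexFun n k x = false
  · rw [if_pos h, if_pos h, jointP_cons]
    cases c <;> norm_num
  · rw [if_neg h, if_neg h, mul_zero]

lemma condP_cons {n k : ℕ} (α : ℝ) (hk : k ≤ 2^n) (c : Bool) (y : Fin n → Bool) :
    condP (n+1) α (lexFun (n+1) k) (Fin.cons c y)
    = (if c then α else 1-α) * condP n α (lexFun n k) y := by
  unfold condP
  rw [pBY_cons α hk c y, pow_succ]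
  ring

lemma sum_condP (n k : ℕ) (α : ℝ) (hk : k ≤ 2^n) :
    ∑ y : Fin n → Bool, condP n α (lexFun n k) y = k := by
  unfold condP pBY
  rw [← Finset.mul_sum, Finset.sum_comm]
  have h1 : ∀ x : Fin n → Bool,
      (∑ y : Fin n → Bool, if lexFun n k x = false then jointP n α x y else 0)
      = if vecVal x < k then (1/2:ℝ)^n else 0 := by
    intro x
    by_cases h : lexFun n k x = false
    · rw [Finset.sum_congr rfl (fun y _ => if_pos h)]
      rw [if_pos ((hlex_iff n k x).1 h)]
      unfold jointP
      rw [← Finset.mul_sum, sum_channel α n x, mul_one]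
    · rw [Finset.sum_congr rfl (fun y _ => if_neg h), Finset.sum_const, smul_zero]
      rw [if_neg (fun hc => h ((hlex_iff n k x).2 hc))]
  rw [Finset.sum_congr rfl (fun x _ => h1 x)]
  have h2 : ∀ x : Fin n → Bool, (if vecVal x < k then (1/2:ℝ)^n else 0)
      = (1/2:ℝ)^n * (if vecVal x < k then (1:ℝ) else 0) := by
    intro x; by_cases h : vecVal x < k <;> simp [h]
  rw [Finset.sum_congr rfl (fun x _ => h2 x), ← Finset.mul_sum, count_lt n k hk]
  rw [← mul_assoc, ← mul_pow]
  norm_num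

lemma Tdy_succ (n k : ℕ) (α : ℝ) (hk : k ≤ 2^n) :
    Tdy α (n+1) k = (1/2) * Tdy α n k + ((k:ℝ)/2^(n+1)) * binEnt α := by
  have key : ∀ y : Fin n → Bool,
      (1/2:ℝ)^(n+1) * f2 (condP (n+1) α (lexFun (n+1) k) (Fin.cons true y))
      + (1/2:ℝ)^(n+1) * f2 (condP (n+1) α (lexFun (n+1) k) (Fin.cons false y))
      = (1/2) * ((1/2:ℝ)^n * f2 (condP n α (lexFun n k) y))
        + ((1/2:ℝ)^(n+1) * binEnt α) * condP n α (lexFun n k) y := by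
    intro y
    rw [condP_cons α hk true y, condP_cons α hk false y]
    simp only [show (true = true) = True from by simp, show (false = true) = False from by simp,
      if_true, if_false]
    rw [f2_mul, f2_mul]
    unfold binEnt
    rw [pow_succ]
    ring
  unfold Tdy
  rw [sum_pi_succ, Fintype.sum_bool, ← Finset.sum_add_distrib,
    Finset.sum_congr rfl (fun y _ => key y), Finset.sum_add_distrib]
  simp only [← Finset.mul_sum]
  rw [sum_condP n k α hk]
  have : ((1/2:ℝ)^(n+1) * binEnt α) * k = ((k:ℝ)/2^(n+1)) * binEnt α := by
    rw [div_pow]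
    ring
  rw [this]

lemma f2_double (p : ℝ) : f2 (2*p) = 2 * f2 p - 2*p := by
  rcases eq_or_ne p 0 with rfl | hp
  · simp [f2]
  · rw [f2, f2, Real.logb_mul two_ne_zero hp, Real.logb_self_eq_one one_lt_two]
    ring

lemma T_half (α : ℝ) (Tα : ℝ → ℝ)
    (hcont : ContinuousOn Tα (Set.Icc 0 1))
    (hdy : ∀ n k : ℕ, k ≤ 2^n → Tα ((k:ℝ)/2^n) = Tdy α n k) :
    ∀ p ∈ Set.Icc (0:ℝ) (1/2), Tα p = (1/2) * Tα (2*p) + p * binEnt α := by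
  intro p hp
  obtain ⟨hp0, hp2⟩ := hp
  set a : ℕ → ℝ := fun m => ((⌊p * 2^(m+1)⌋₊ : ℕ) : ℝ) / 2^(m+1) with ha_def
  have hpow : ∀ m : ℕ, (0:ℝ) < 2^m := fun m => by positivity
  have hfl : ∀ m : ℕ, ((⌊p * 2^(m+1)⌋₊ : ℕ) : ℝ) ≤ p * 2^(m+1) :=
    fun m => Nat.floor_le (by positivity)
  have hfl2 : ∀ m : ℕ, p * 2^(m+1) < ((⌊p * 2^(m+1)⌋₊ : ℕ) : ℝ) + 1 :=
    fun m => Nat.lt_floor_add_one _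
  have hk : ∀ m : ℕ, ⌊p * 2^(m+1)⌋₊ ≤ 2^m := by
    intro m
    have h1 : p * 2^(m+1) ≤ 2^m := by
      have : (2:ℝ)^(m+1) = 2 * 2^m := by rw [pow_succ]; ring
      nlinarith [hpow m, hpow (m+1)]
    have : ((⌊p * 2^(m+1)⌋₊ : ℕ) : ℝ) ≤ ((2^m : ℕ) : ℝ) := by
      push_cast; linarith [hfl m]
    exact_mod_cast this
  have ha0 : ∀ m, 0 ≤ a m := fun m => by positivity
  have ha_le : ∀ m, a m ≤ p := by
    intro m
    rw [ha_def, div_le_iff₀ (hpow (m+1))]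
    exact hfl m
  have ha_lb : ∀ m, p - (1/2)^(m+1) ≤ a m := by
    intro m
    rw [ha_def, le_div_iff₀ (hpow (m+1))]
    have h2 : ((1:ℝ)/2)^(m+1) * 2^(m+1) = 1 := by
      rw [div_pow, one_pow, div_mul_cancel₀]
      exact ne_of_gt (hpow (m+1))
    nlinarith [hfl2 m]
  -- a m → p
  have hhalf : Filter.Tendsto (fun m : ℕ => ((1:ℝ)/2)^(m+1)) Filter.atTop (nhds 0) := by
    have h := tendsto_pow_atTop_nhds_zero_of_lt_one (by norm_num : (0:ℝ) ≤ 1/2)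
      (by norm_num : (1:ℝ)/2 < 1)
    exact h.comp (Filter.tendsto_add_atTop_nat 1)
  have hta : Filter.Tendsto a Filter.atTop (nhds p) := by
    have hub : Filter.Tendsto (fun m : ℕ => p - (1/2:ℝ)^(m+1)) Filter.atTop (nhds p) := by
      have h := (tendsto_const_nhds (x := p) (f := (Filter.atTop : Filter ℕ))).sub hhalf
      rw [sub_zero] at h
      exact h
    exact tendsto_of_tendsto_of_tendsto_of_le_of_le hub tendsto_const_nhds
      (fun m => ha_lb m) (fun m => ha_le m)
  -- the dyadic recursion at each m
  have heq : ∀ m : ℕ, Tα (a m) = (1/2) * Tα (2 * a m) + a m * binEnt α := by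
    intro m
    set k := ⌊p * 2^(m+1)⌋₊ with hkdef
    have e1 : Tα (a m) = Tdy α (m+1) k :=
      hdy (m+1) k (le_trans (hk m) (Nat.pow_le_pow_right (by norm_num) (by omega)))
    have e3 : 2 * a m = (k:ℝ)/2^m := by
      show 2 * ((k:ℝ)/2^(m+1)) = (k:ℝ)/2^m
      rw [pow_succ]
      field_simp
    have e2 : Tα (2 * a m) = Tdy α m k := by rw [e3]; exact hdy m k (hk m)
    rw [e1, Tdy_succ m k α (hk m), e2]
  -- pass to the limit
  have hmemp : ∀ m, a m ∈ Set.Icc (0:ℝ) 1 :=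
    fun m => ⟨ha0 m, le_trans (ha_le m) (by linarith)⟩
  have hmem2p : ∀ m, 2 * a m ∈ Set.Icc (0:ℝ) 1 :=
    fun m => ⟨by linarith [ha0 m], by linarith [ha_le m]⟩
  have hpmem : p ∈ Set.Icc (0:ℝ) 1 := ⟨hp0, by linarith⟩
  have h2pmem : (2*p) ∈ Set.Icc (0:ℝ) 1 := ⟨by linarith, by linarith⟩
  have ta1 : Filter.Tendsto a Filter.atTop (nhdsWithin p (Set.Icc 0 1)) :=
    tendsto_nhdsWithin_of_tendsto_nhds_of_eventually_within a hta
      (Filter.Eventually.of_forall hmemp)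
  have ta2 : Filter.Tendsto (fun m => 2 * a m) Filter.atTop
      (nhdsWithin (2*p) (Set.Icc 0 1)) :=
    tendsto_nhdsWithin_of_tendsto_nhds_of_eventually_within _ (hta.const_mul 2)
      (Filter.Eventually.of_forall hmem2p)
  have t1 : Filter.Tendsto (fun m => Tα (a m)) Filter.atTop (nhds (Tα p)) :=
    (hcont p hpmem).tendsto.comp ta1
  have t2 : Filter.Tendsto (fun m => Tα (2 * a m)) Filter.atTop (nhds (Tα (2*p))) :=
    (hcont (2*p) h2pmem).tendsto.comp ta2
  have t3 : Filter.Tendsto (fun m => (1/2) * Tα (2 * a m) + a m * binEnt α)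
      Filter.atTop (nhds ((1/2) * Tα (2*p) + p * binEnt α)) :=
    ((t2.const_mul (1/2)).add (hta.mul_const (binEnt α)))
  have t1' : Filter.Tendsto (fun m => Tα (a m)) Filter.atTop
      (nhds ((1/2) * Tα (2*p) + p * binEnt α)) := by
    refine t3.congr (fun m => (heq m).symm)
  exact tendsto_nhds_unique t1 t1'


/-- The gap halves under doubling:
`(1/2)(T_α(2p) - f(2p)H(α)) = T_α(p) - f(p)H(α)` for `p ∈ [0,1/2]`; consequently,
to prove `T_α(p) ≥ f(p)H(α)` on `[0,1]` it suffices to prove it on `[1/2,1]`. -/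
theorem gap_halves (α : ℝ) (hα : α ∈ Set.Ioo (0:ℝ) (1/2)) (Tα : ℝ → ℝ)
    (hcont : ContinuousOn Tα (Set.Icc 0 1))
    (hdy : ∀ n k : ℕ, k ≤ 2^n → Tα ((k:ℝ)/2^n) = Tdy α n k) :
    (∀ p ∈ Set.Icc (0:ℝ) (1/2),
      (1/2) * (Tα (2 * p) - f2 (2 * p) * binEnt α) = Tα p - f2 p * binEnt α) ∧
    ((∀ p ∈ Set.Icc (1/2 : ℝ) 1, Tα p ≥ f2 p * binEnt α) →
      ∀ p ∈ Set.Icc (0:ℝ) 1, Tα p ≥ f2 p * binEnt α) := by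
  have hhalf := T_half α Tα hcont hdy
  have part1 : ∀ p ∈ Set.Icc (0:ℝ) (1/2),
      (1/2) * (Tα (2 * p) - f2 (2 * p) * binEnt α) = Tα p - f2 p * binEnt α := by
    intro p hp
    rw [f2_double, hhalf p hp]
    ring
  refine ⟨part1, ?_⟩
  intro hyp p hp
  have key : ∀ m : ℕ, ∀ q, q ∈ Set.Icc (0:ℝ) 1 → 1/2 ≤ 2^m * q →
      Tα q ≥ f2 q * binEnt α := by
    intro m
    induction m with
    | zero =>
        intro q hq h
        exact hyp q ⟨by simpa using h, hq.2⟩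
    | succ m ih =>
        intro q hq h
        rcases le_or_gt (1/2) q with hge | hlt
        · exact hyp q ⟨hge, hq.2⟩
        · have heq := part1 q ⟨hq.1, le_of_lt hlt⟩
          have h2q : (2*q) ∈ Set.Icc (0:ℝ) 1 := ⟨by linarith [hq.1], by linarith⟩
          have h' : 1/2 ≤ 2^m * (2*q) := by
            rw [show (2:ℝ)^m * (2*q) = 2^(m+1)*q from by rw [pow_succ]; ring]
            exact h
          have hge2 := ih (2*q) h2q h'
          linarith
  rcases eq_or_lt_of_le hp.1 with h0 | h0
  · have heq := part1 0 ⟨le_rfl, by norm_num⟩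
    rw [mul_zero] at heq
    simp only [f2_zero, zero_mul, sub_zero] at heq
    rw [← h0, f2_zero, zero_mul]
    linarith
  · obtain ⟨m, hm⟩ := pow_unbounded_of_one_lt (R := ℝ) (1/(2*p)) one_lt_two
    have hfin : 1/2 ≤ 2^m * p := by
      rw [div_lt_iff₀ (by linarith : (0:ℝ) < 2*p)] at hm
      nlinarith
    exact key m p hp hfin
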